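/- For every natural number n ≥ 1, (L n : ℝ) = (n! / √3) · ( (√3 − 1)^(−n) − (−√3 − 1)^(−n) ) + (n! / √3) · ( (√3 − 1)^(−n+1) − (−√3 − 1)^(−n+1) ), where the powers are integer powers (zpow) of nonzero real numbers. -/

import Mathlib

noncomputable def Laux.a : ℝ := (1 + Real.sqrt 3) / 2
noncomputable def Laux.b : ℝ := (1 - Real.sqrt 3) / 2
noncomputable def Laux.E (m : ℕ) : ℝ := (Laux.a ^ (m + 1) - Laux.b ^ (m + 1)) / Real.sqrt 3

namespace Laux

lemma hs2 : Real.sqrt 3 ^ 2 = 3 := Real.sq_sqrt (by norm_num)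
lemma hs_ne : Real.sqrt 3 ≠ 0 := by positivity
lemma hab_sub : a - b = Real.sqrt 3 := by unfold a b; ring
lemma hE0 : E 0 = 1 := by
  unfold E; rw [pow_one, pow_one, hab_sub, div_self hs_ne]

lemma Sk_closed (k : ℕ) : ∑ j ∈ Finset.range k, E j * E (k - 1 - j) =
    ((k : ℝ) * (a ^ (k + 1) + b ^ (k + 1)) + (a ^ k - b ^ k) / Real.sqrt 3) / 3 := by
  have hterm : ∀ j ∈ Finset.range k, E j * E (k - 1 - j) =
      (a ^ (k + 1) + b ^ (k + 1)) / 3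
        - (a * b) * (a ^ j * b ^ (k - 1 - j) + b ^ j * a ^ (k - 1 - j)) / 3 := by
    intro j hj
    have hj' : j < k := Finset.mem_range.mp hj
    have h1 : k - 1 - j + 1 = k - j := by omega
    have hss : Real.sqrt 3 * Real.sqrt 3 = 3 := Real.mul_self_sqrt (by norm_num)
    unfold E
    rw [h1, div_mul_div_comm, hss]
    have e1 : a ^ (j + 1) * a ^ (k - j) = a ^ (k + 1) := by
      rw [← pow_add]; congr 1; omega
    have e2 : b ^ (j + 1) * b ^ (k - j) = b ^ (k + 1) := by
      rw [← pow_add]; congr 1; omega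
    have e3 : a ^ (j + 1) * b ^ (k - j) = (a * b) * (a ^ j * b ^ (k - 1 - j)) := by
      rw [pow_succ, ← h1, pow_succ]; ring
    have e4 : b ^ (j + 1) * a ^ (k - j) = (a * b) * (b ^ j * a ^ (k - 1 - j)) := by
      rw [pow_succ, ← h1, pow_succ]; ring
    field_simp
    linear_combination e1 - e3 - e4 + e2
  rw [Finset.sum_congr rfl hterm]
  rw [Finset.sum_sub_distrib, Finset.sum_const, Finset.card_range]
  have g1 : (∑ j ∈ Finset.range k, a ^ j * b ^ (k - 1 - j)) = (a ^ k - b ^ k) / Real.sqrt 3 := by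
    rw [eq_div_iff hs_ne, ← hab_sub]; exact geom_sum₂_mul a b k
  have g2 : (∑ j ∈ Finset.range k, b ^ j * a ^ (k - 1 - j)) = (a ^ k - b ^ k) / Real.sqrt 3 := by
    rw [eq_div_iff hs_ne]
    have h := geom_sum₂_mul b a k
    have hba : b - a = -Real.sqrt 3 := by rw [← hab_sub]; ring
    rw [hba] at h
    linear_combination -h
  have hab_mul : a * b = -(1:ℝ)/2 := by
    unfold a b; linear_combination -hs2/4
  rw [← Finset.sum_div, ← Finset.mul_sum]
  rw [Finset.sum_add_distrib, g1, g2, hab_mul]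
  ring

lemma key_id (m : ℕ) : ((m : ℝ) + 1) * E (m + 1) =
    (∑ j ∈ Finset.range (m + 1), E j * E (m - j)) +
    (∑ j ∈ Finset.range m, E j * E (m - 1 - j)) := by
  have h := Sk_closed (m + 1)
  simp only [Nat.add_sub_cancel] at h
  rw [h, Sk_closed m]
  push_cast
  unfold E
  have ha2 : a ^ (m + 2) = a ^ m * a ^ 2 := by ring
  have hb2 : b ^ (m + 2) = b ^ m * b ^ 2 := by ring
  have ha1 : a ^ (m + 1) = a ^ m * a := by ring
  have hb1 : b ^ (m + 1) = b ^ m * b := by ring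
  rw [ha2, hb2, ha1, hb1]
  generalize a ^ m = A
  generalize b ^ m = B
  unfold a b
  have h3 : Real.sqrt 3 ^ 3 = 3 * Real.sqrt 3 := by rw [pow_succ, hs2]
  have h4 : Real.sqrt 3 ^ 4 = 9 := by rw [show (4:ℕ) = 2 * 2 from rfl, pow_mul, hs2]; norm_num
  field_simp
  ring_nf
  simp only [hs2, h3, h4]
  ring

lemma G_closed (G : ℕ → ℕ) (hG0 : G 0 = 1)
    (hG : ∀ n : ℕ, 1 ≤ n →
      G n = (∑ i ∈ Finset.Icc 1 n,
              Nat.choose (n - 1) (i - 1) * G (n - i) * G (i - 1)) +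
            (∑ i ∈ Finset.Icc 1 (n - 1),
              (n - i) * Nat.choose (n - 1) (i - 1) * G (n - i - 1) * G (i - 1))) :
    ∀ m : ℕ, (G m : ℝ) = (Nat.factorial m : ℝ) * E m := by
  intro m
  induction m using Nat.strong_induction_on with
  | _ m ih =>
    match m with
    | 0 => simp [hG0, hE0]
    | n + 1 =>
      rw [hG (n + 1) (by omega)]
      simp only [Nat.add_sub_cancel]
      push_cast
      have h1 : ∀ i ∈ Finset.Icc 1 (n + 1),
          (Nat.choose n (i - 1) : ℝ) * (G (n + 1 - i) : ℝ) * (G (i - 1) : ℝ) =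
          (Nat.factorial n : ℝ) * (E (i - 1) * E (n + 1 - i)) := by
        intro i hi
        obtain ⟨hi1, hi2⟩ := Finset.mem_Icc.mp hi
        rw [ih (n + 1 - i) (by omega), ih (i - 1) (by omega)]
        have h := Nat.choose_mul_factorial_mul_factorial (show i - 1 ≤ n by omega)
        have hidx : n - (i - 1) = n + 1 - i := by omega
        rw [hidx] at h
        have hcf : (Nat.choose n (i - 1) : ℝ) * (Nat.factorial (i - 1) : ℝ) *
            (Nat.factorial (n + 1 - i) : ℝ) = (Nat.factorial n : ℝ) := by exact_mod_cast h
        linear_combination (E (i - 1) * E (n + 1 - i)) * hcf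
      have h2 : ∀ i ∈ Finset.Icc 1 n,
          ((n + 1 - i : ℕ) : ℝ) * (Nat.choose n (i - 1) : ℝ) * (G (n + 1 - i - 1) : ℝ) *
            (G (i - 1) : ℝ) =
          (Nat.factorial n : ℝ) * (E (i - 1) * E (n - i)) := by
        intro i hi
        obtain ⟨hi1, hi2⟩ := Finset.mem_Icc.mp hi
        have hidx0 : n + 1 - i - 1 = n - i := by omega
        rw [hidx0, ih (n - i) (by omega), ih (i - 1) (by omega)]
        have h := Nat.choose_mul_factorial_mul_factorial (show i - 1 ≤ n by omega)
        have hidx : n - (i - 1) = n + 1 - i := by omega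
        rw [hidx] at h
        have hfac : (n + 1 - i) * Nat.factorial (n - i) = Nat.factorial (n + 1 - i) := by
          have h3 : n + 1 - i = (n - i) + 1 := by omega
          rw [h3, Nat.factorial_succ]
        have hcf : ((n + 1 - i : ℕ) : ℝ) * (Nat.choose n (i - 1) : ℝ) *
            (Nat.factorial (i - 1) : ℝ) * (Nat.factorial (n - i) : ℝ) =
            (Nat.factorial n : ℝ) := by
          have : (n + 1 - i) * Nat.choose n (i - 1) * Nat.factorial (i - 1) *
              Nat.factorial (n - i) = Nat.factorial n := by
            calc (n + 1 - i) * Nat.choose n (i - 1) * Nat.factorial (i - 1) *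
                Nat.factorial (n - i)
                = Nat.choose n (i - 1) * Nat.factorial (i - 1) *
                  ((n + 1 - i) * Nat.factorial (n - i)) := by ring
              _ = Nat.factorial n := by rw [hfac, h]
          exact_mod_cast this
        linear_combination (E (i - 1) * E (n - i)) * hcf
      rw [Finset.sum_congr rfl h1, Finset.sum_congr rfl h2]
      rw [← Finset.mul_sum, ← Finset.mul_sum]
      have r1 : (∑ i ∈ Finset.Icc 1 (n + 1), E (i - 1) * E (n + 1 - i)) =
          ∑ j ∈ Finset.range (n + 1), E j * E (n - j) := by
        rw [← Finset.Ico_add_one_right_eq_Icc, Finset.sum_Ico_eq_sum_range]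
        apply Finset.sum_congr (by norm_num)
        intro j hj
        have e1 : 1 + j - 1 = j := by omega
        have e2 : n + 1 - (1 + j) = n - j := by omega
        rw [e1, e2]
      have r2 : (∑ i ∈ Finset.Icc 1 n, E (i - 1) * E (n - i)) =
          ∑ j ∈ Finset.range n, E j * E (n - 1 - j) := by
        rw [← Finset.Ico_add_one_right_eq_Icc, Finset.sum_Ico_eq_sum_range]
        apply Finset.sum_congr (by norm_num)
        intro j hj
        have e1 : 1 + j - 1 = j := by omega
        have e2 : n - (1 + j) = n - 1 - j := by omega
        rw [e1, e2]
      rw [r1, r2, Nat.factorial_succ]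
      push_cast
      linear_combination (-(Nat.factorial n : ℝ)) * key_id n

lemma inv_a : (Real.sqrt 3 - 1)⁻¹ = a :=
  inv_eq_of_mul_eq_one_right (by unfold a; linear_combination hs2 / 2)

lemma inv_b : (-Real.sqrt 3 - 1)⁻¹ = b :=
  inv_eq_of_mul_eq_one_right (by unfold b; linear_combination hs2 / 2)

end Laux

/-- Closed formula for the number `L n` of complete τ-exceptional sequences over
`Λ_n^2`: `L n = (n!/√3) * ((√3-1)^(-n) - (-√3-1)^(-n))
              + (n!/√3) * ((√3-1)^(-n+1) - (-√3-1)^(-n+1))` for `n ≥ 1`. -/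
theorem L_closed_formula (G : ℕ → ℕ) (hG0 : G 0 = 1)
    (hG : ∀ n : ℕ, 1 ≤ n →
      G n = (∑ i ∈ Finset.Icc 1 n,
              Nat.choose (n - 1) (i - 1) * G (n - i) * G (i - 1)) +
            (∑ i ∈ Finset.Icc 1 (n - 1),
              (n - i) * Nat.choose (n - 1) (i - 1) * G (n - i - 1) * G (i - 1)))
    (L : ℕ → ℕ) (hL0 : L 0 = 0)
    (hL : ∀ n : ℕ, 1 ≤ n →
      L n = n * G (n - 1) + n * (n - 1) * G (n - 2)) :
    ∀ n : ℕ, 1 ≤ n → (L n : ℝ) =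
      (Nat.factorial n : ℝ) / Real.sqrt 3 *
        ((Real.sqrt 3 - 1) ^ (-(n : ℤ)) - (-Real.sqrt 3 - 1) ^ (-(n : ℤ))) +
      (Nat.factorial n : ℝ) / Real.sqrt 3 *
        ((Real.sqrt 3 - 1) ^ (-(n : ℤ) + 1) - (-Real.sqrt 3 - 1) ^ (-(n : ℤ) + 1)) := by
  have hGc := Laux.G_closed G hG0 hG
  intro n hn
  obtain ⟨m, rfl⟩ : ∃ m, n = m + 1 := ⟨n - 1, by omega⟩
  rw [hL (m + 1) (by omega)]
  simp only [Nat.add_sub_cancel]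
  have hz1 : (Real.sqrt 3 - 1) ^ (-((m + 1 : ℕ) : ℤ)) = Laux.a ^ (m + 1) := by
    rw [zpow_neg, zpow_natCast, ← inv_pow, Laux.inv_a]
  have hz2 : (-Real.sqrt 3 - 1) ^ (-((m + 1 : ℕ) : ℤ)) = Laux.b ^ (m + 1) := by
    rw [zpow_neg, zpow_natCast, ← inv_pow, Laux.inv_b]
  have hee : (-((m + 1 : ℕ) : ℤ) + 1) = -(m : ℤ) := by push_cast; ring
  have hz3 : (Real.sqrt 3 - 1) ^ (-((m + 1 : ℕ) : ℤ) + 1) = Laux.a ^ m := by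
    rw [hee, zpow_neg, zpow_natCast, ← inv_pow, Laux.inv_a]
  have hz4 : (-Real.sqrt 3 - 1) ^ (-((m + 1 : ℕ) : ℤ) + 1) = Laux.b ^ m := by
    rw [hee, zpow_neg, zpow_natCast, ← inv_pow, Laux.inv_b]
  rw [hz1, hz2, hz3, hz4]
  match m with
  | 0 =>
    push_cast
    rw [hGc 0, Laux.hE0]
    unfold Laux.a Laux.b
    norm_num
    field_simp
    ring
  | k + 1 =>
    have h2 : k + 1 + 1 - 2 = k := by omega
    rw [h2]
    have hf3 : (k + 1 + 1).factorial = (k + 1 + 1) * ((k + 1) * k.factorial) := by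
      rw [Nat.factorial_succ, Nat.factorial_succ]
    rw [hf3]
    push_cast
    rw [hGc (k + 1), hGc k]
    rw [show (k + 1).factorial = (k + 1) * k.factorial from Nat.factorial_succ k]
    unfold Laux.E
    push_cast
    field_simp
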